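/- Let n ≥ 1 be an integer, P ≥ 1 and C > 0 and ε > 0 real numbers, and set L = εC/(n(P+1)). Let S be a finite index set with |S| ≤ n and let d_k ∈ ℂ for k ∈ S satisfy Im(d_k) ≥ 0 for all k. Suppose the rounded demands satisfy |∑_{k∈S} ĥd_k| ≤ (1 + 2ε)·C and ∑_{k∈S, Re(d_k)<0} (−Re(ĥd_k)) ≤ (P+1)·C. Then the original demands satisfy |∑_{k∈S} d_k| ≤ (1 + 3ε)·C. -/

import Mathlib

/-- The rounded demand: real part rounded up (resp. down) to a multiple of `L`
when it is nonnegative (resp. negative), imaginary part always rounded up. -/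
noncomputable def roundDemand (L : ℝ) (d : ℂ) : ℂ :=
  if 0 ≤ d.re then
    ⟨(⌈d.re / L⌉ : ℤ) * L, (⌈d.im / L⌉ : ℤ) * L⟩
  else
    ⟨(⌊d.re / L⌋ : ℤ) * L, (⌈d.im / L⌉ : ℤ) * L⟩

lemma ceil_err (L x : ℝ) (hL : 0 < L) : |x - (⌈x / L⌉ : ℤ) * L| ≤ L := by
  have h1 : x / L ≤ (⌈x / L⌉ : ℝ) := Int.le_ceil _
  have h2 : (⌈x / L⌉ : ℝ) < x / L + 1 := Int.ceil_lt_add_one _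
  rw [abs_le]
  constructor
  · nlinarith [mul_lt_mul_of_pos_right h2 hL, div_mul_cancel₀ x hL.ne']
  · nlinarith [mul_le_mul_of_nonneg_right h1 hL.le, div_mul_cancel₀ x hL.ne']

lemma floor_err (L x : ℝ) (hL : 0 < L) : |x - (⌊x / L⌋ : ℤ) * L| ≤ L := by
  have h1 : (⌊x / L⌋ : ℝ) ≤ x / L := Int.floor_le _
  have h2 : x / L - 1 < (⌊x / L⌋ : ℝ) := Int.sub_one_lt_floor _
  rw [abs_le]
  constructor
  · nlinarith [mul_le_mul_of_nonneg_right h1 hL.le, div_mul_cancel₀ x hL.ne']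
  · nlinarith [mul_lt_mul_of_pos_right h2 hL, div_mul_cancel₀ x hL.ne']

lemma round_err (L : ℝ) (hL : 0 < L) (z : ℂ) :
    ‖z - roundDemand L z‖ ≤ 2 * L := by
  have hre : |(z - roundDemand L z).re| ≤ L := by
    unfold roundDemand
    split_ifs <;> simpa using (by first | exact ceil_err L z.re hL | exact floor_err L z.re hL)
  have him : |(z - roundDemand L z).im| ≤ L := by
    unfold roundDemand
    split_ifs <;> simpa using ceil_err L z.im hL
  calc ‖z - roundDemand L z‖ ≤ |(z - roundDemand L z).re| + |(z - roundDemand L z).im| :=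
        Complex.norm_le_abs_re_add_abs_im _
    _ ≤ L + L := add_le_add hre him
    _ = 2 * L := by ring

/-- if the rounded demands satisfy the inflated capacity
`(1 + 2ε)C` and the rounded negative real projection is at most `(P+1)C`,
then the original demands violate the capacity by a factor at most `1 + 3ε`. -/
theorem stmt_6 {ι : Type*} (n : ℕ) (hn : 1 ≤ n) (P C ε L : ℝ)
    (hP : 1 ≤ P) (hC : 0 < C) (hε : 0 < ε)
    (hL : L = ε * C / (n * (P + 1)))
    (S : Finset ι) (hS : S.card ≤ n) (d : ι → ℂ)
    (hIm : ∀ k ∈ S, 0 ≤ (d k).im)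
    (hRound : ‖∑ k ∈ S, roundDemand L (d k)‖ ≤ (1 + 2 * ε) * C)
    (hNeg : ∑ k ∈ S.filter (fun k => (d k).re < 0), -(roundDemand L (d k)).re
              ≤ (P + 1) * C) :
    ‖∑ k ∈ S, d k‖ ≤ (1 + 3 * ε) * C := by
  have hn' : (0:ℝ) < n := by exact_mod_cast hn
  have hLpos : 0 < L := by rw [hL]; positivity
  have hbound : (n : ℝ) * (2 * L) ≤ ε * C := by
    have hP1 : (0:ℝ) < P + 1 := by linarith
    set t := ((n:ℝ) * (P + 1))⁻¹ with ht
    have htpos : 0 < t := by positivity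
    have hcancel : (n:ℝ) * (P + 1) * t = 1 := mul_inv_cancel₀ (by positivity)
    have key : ε * C * ((n:ℝ) * (P + 1) * t) = ε * C := by rw [hcancel]; ring
    rw [hL, div_eq_mul_inv, ← ht]
    nlinarith [key, mul_nonneg (mul_nonneg (mul_nonneg (mul_nonneg hε.le hC.le) hn'.le)
      htpos.le) (by linarith : (0:ℝ) ≤ P - 1)]
  have herr : ‖∑ k ∈ S, (d k - roundDemand L (d k))‖ ≤ ε * C := by
    have h1 : ‖∑ k ∈ S, (d k - roundDemand L (d k))‖
        ≤ ∑ k ∈ S, ‖d k - roundDemand L (d k)‖ := by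
      exact
        norm_sum_le S (fun k => d k - roundDemand L (d k))
    have h2 : ∑ k ∈ S, ‖d k - roundDemand L (d k)‖ ≤ ∑ _k ∈ S, 2 * L :=
      Finset.sum_le_sum fun k _ => round_err L hLpos (d k)
    have h3 : (∑ _k ∈ S, 2 * L) = S.card * (2 * L) := by
      rw [Finset.sum_const, nsmul_eq_mul]
    have h4 : (S.card : ℝ) * (2 * L) ≤ n * (2 * L) := by
      have : (S.card : ℝ) ≤ n := by exact_mod_cast hS
      nlinarith
    linarith [h1, h2, h3 ▸ h2, h4, hbound]
  calc ‖∑ k ∈ S, d k‖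
      = ‖(∑ k ∈ S, roundDemand L (d k)) + ∑ k ∈ S, (d k - roundDemand L (d k))‖ := by
        congr 1
        rw [← Finset.sum_add_distrib]
        apply Finset.sum_congr rfl
        intro k _
        ring
    _ ≤ ‖∑ k ∈ S, roundDemand L (d k)‖
          + ‖∑ k ∈ S, (d k - roundDemand L (d k))‖ := norm_add_le _ _
    _ ≤ (1 + 2 * ε) * C + ε * C := add_le_add hRound herr
    _ = (1 + 3 * ε) * C := by ring
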